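/- arXiv:1006.1460 — 3 statements merged into one kernel-verified Lean document; each statement's English description precedes it below -/
import Mathlib

section
/- Let α, β, γ be real numbers such that |α|, |β|, |γ| are pairwise distinct. Define Δ(α,β,γ) = sgn((α² − β²)(α² − γ²)(β² − γ²)). Then the function x ↦ Δ(α,β,γ) · L_{α,β,γ}(x) is strictly increasing on (0,+∞). -/
open Real Set

lemma aux_sinh_lt {t : ℝ} (ht : 0 < t) : Real.sinh t < t * Real.cosh t := by
  have h : StrictMonoOn (fun s : ℝ => s * Real.cosh s - Real.sinh s) (Set.Ici 0) := by
    apply strictMonoOn_of_deriv_pos (convex_Ici 0)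
    · exact ((continuous_id.mul Real.continuous_cosh).sub Real.continuous_sinh).continuousOn
    · intro s hs
      rw [interior_Ici, Set.mem_Ioi] at hs
      have h1 : HasDerivAt (fun s : ℝ => s * Real.cosh s - Real.sinh s)
          (1 * Real.cosh s + s * Real.sinh s - Real.cosh s) s :=
        ((hasDerivAt_id s).mul (Real.hasDerivAt_cosh s)).sub (Real.hasDerivAt_sinh s)
      rw [h1.deriv]
      have h2 : 0 < Real.sinh s := Real.sinh_pos_iff.mpr hs
      nlinarith
  have := h Set.self_mem_Ici (Set.mem_Ici.mpr ht.le) ht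
  simp only [Real.cosh_zero, Real.sinh_zero, zero_mul, sub_zero] at this
  linarith

lemma sinh_div_strictMono : StrictMonoOn (fun t : ℝ => Real.sinh t / t) (Set.Ioi 0) := by
  apply strictMonoOn_of_deriv_pos (convex_Ioi 0)
  · exact Real.continuous_sinh.continuousOn.div continuousOn_id fun t ht => ne_of_gt ht
  · intro t ht
    rw [interior_Ioi, Set.mem_Ioi] at ht
    have h1 : HasDerivAt (fun t : ℝ => Real.sinh t / t)
        ((Real.cosh t * t - Real.sinh t * 1) / t ^ 2) t :=
      (Real.hasDerivAt_sinh t).div (hasDerivAt_id t) (ne_of_gt ht)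
    rw [h1.deriv]
    have := aux_sinh_lt ht
    have h2 : (0:ℝ) < t ^ 2 := by positivity
    apply div_pos _ h2
    nlinarith

lemma sinh_cross {v u : ℝ} (hv : 0 < v) (hvu : v < u) :
    u * Real.sinh v < v * Real.sinh u := by
  have hu : 0 < u := hv.trans hvu
  have := sinh_div_strictMono (Set.mem_Ioi.mpr hv) (Set.mem_Ioi.mpr hu) hvu
  rw [div_lt_div_iff₀ hv hu] at this
  linarith

lemma sinh_ratio_strictMono {p r : ℝ} (hr : 0 < r) (hpr : r < p) :
    StrictMonoOn (fun x : ℝ => Real.sinh (p * x) / Real.sinh (r * x)) (Set.Ioi 0) := by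
  have hp : 0 < p := hr.trans hpr
  apply strictMonoOn_of_deriv_pos (convex_Ioi 0)
  · apply ContinuousOn.div
    · exact (Real.continuous_sinh.comp (continuous_const.mul continuous_id)).continuousOn
    · exact (Real.continuous_sinh.comp (continuous_const.mul continuous_id)).continuousOn
    · intro x hx
      exact Real.sinh_ne_zero.mpr (ne_of_gt (mul_pos hr hx))
  · intro x hx
    rw [interior_Ioi, Set.mem_Ioi] at hx
    have hdp : HasDerivAt (fun x : ℝ => Real.sinh (p * x)) (Real.cosh (p * x) * p) x := by
      have := (Real.hasDerivAt_sinh (p * x)).comp x ((hasDerivAt_id x).const_mul p)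
      simpa [mul_one, Function.comp_def] using this
    have hdr : HasDerivAt (fun x : ℝ => Real.sinh (r * x)) (Real.cosh (r * x) * r) x := by
      have := (Real.hasDerivAt_sinh (r * x)).comp x ((hasDerivAt_id x).const_mul r)
      simpa [mul_one, Function.comp_def] using this
    have hrx : 0 < Real.sinh (r * x) := Real.sinh_pos_iff.mpr (mul_pos hr hx)
    have h1 : HasDerivAt (fun x : ℝ => Real.sinh (p * x) / Real.sinh (r * x))
        ((Real.cosh (p * x) * p * Real.sinh (r * x)
          - Real.sinh (p * x) * (Real.cosh (r * x) * r)) / Real.sinh (r * x) ^ 2) x :=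
      hdp.div hdr (ne_of_gt hrx)
    rw [h1.deriv]
    apply div_pos _ (by positivity)
    -- numerator identity
    have key : (p + r) * x * Real.sinh ((p - r) * x) < (p - r) * x * Real.sinh ((p + r) * x) :=
      sinh_cross (mul_pos (by linarith) hx) (by nlinarith)
    have id1 : Real.cosh (p * x) * p * Real.sinh (r * x)
        - Real.sinh (p * x) * (Real.cosh (r * x) * r)
        = ((p - r) * Real.sinh ((p + r) * x) - (p + r) * Real.sinh ((p - r) * x)) / 2 := by
      rw [show (p + r) * x = p * x + r * x by ring, show (p - r) * x = p * x - r * x by ring,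
        Real.sinh_add, Real.sinh_sub]
      ring
    rw [id1]
    have h3 : (p + r) * Real.sinh ((p - r) * x) < (p - r) * Real.sinh ((p + r) * x) := by
      have hlt : x * ((p + r) * Real.sinh ((p - r) * x)) < x * ((p - r) * Real.sinh ((p + r) * x)) := by
        nlinarith [key]
      exact lt_of_mul_lt_mul_left hlt hx.le
    linarith

lemma cosh_diff_eq (X Y : ℝ) :
    Real.cosh X - Real.cosh Y = 2 * Real.sinh ((X + Y) / 2) * Real.sinh ((X - Y) / 2) := by
  have h1 := Real.cosh_add ((X + Y) / 2) ((X - Y) / 2)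
  have h2 := Real.cosh_sub ((X + Y) / 2) ((X - Y) / 2)
  rw [show (X + Y) / 2 + (X - Y) / 2 = X by ring] at h1
  rw [show (X + Y) / 2 - (X - Y) / 2 = Y by ring] at h2
  linarith

lemma M_lt {u v w x y : ℝ} (hw : 0 ≤ w) (hwv : w < v) (hvu : v < u)
    (hx : 0 < x) (hy : 0 < y) (hxy : x < y) :
    (Real.cosh (u * x) - Real.cosh (w * x)) * (Real.cosh (v * y) - Real.cosh (w * y)) <
    (Real.cosh (u * y) - Real.cosh (w * y)) * (Real.cosh (v * x) - Real.cosh (w * x)) := by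
  have hr : 0 < (v + w) / 2 := by linarith
  have hpr : (v + w) / 2 < (u + w) / 2 := by linarith
  have hs : 0 < (v - w) / 2 := by linarith
  have hsq : (v - w) / 2 < (u - w) / 2 := by linarith
  have e1 : Real.cosh (u * x) - Real.cosh (w * x)
      = 2 * Real.sinh ((u + w) / 2 * x) * Real.sinh ((u - w) / 2 * x) := by
    rw [cosh_diff_eq, show (u * x + w * x) / 2 = (u + w) / 2 * x by ring,
      show (u * x - w * x) / 2 = (u - w) / 2 * x by ring]
  have e2 : Real.cosh (u * y) - Real.cosh (w * y)
      = 2 * Real.sinh ((u + w) / 2 * y) * Real.sinh ((u - w) / 2 * y) := by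
    rw [cosh_diff_eq, show (u * y + w * y) / 2 = (u + w) / 2 * y by ring,
      show (u * y - w * y) / 2 = (u - w) / 2 * y by ring]
  have e3 : Real.cosh (v * x) - Real.cosh (w * x)
      = 2 * Real.sinh ((v + w) / 2 * x) * Real.sinh ((v - w) / 2 * x) := by
    rw [cosh_diff_eq, show (v * x + w * x) / 2 = (v + w) / 2 * x by ring,
      show (v * x - w * x) / 2 = (v - w) / 2 * x by ring]
  have e4 : Real.cosh (v * y) - Real.cosh (w * y)
      = 2 * Real.sinh ((v + w) / 2 * y) * Real.sinh ((v - w) / 2 * y) := by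
    rw [cosh_diff_eq, show (v * y + w * y) / 2 = (v + w) / 2 * y by ring,
      show (v * y - w * y) / 2 = (v - w) / 2 * y by ring]
  have hf := sinh_ratio_strictMono hr hpr (Set.mem_Ioi.mpr hx) (Set.mem_Ioi.mpr hy) hxy
  have hg := sinh_ratio_strictMono hs hsq (Set.mem_Ioi.mpr hx) (Set.mem_Ioi.mpr hy) hxy
  simp only at hf hg
  have p1 : 0 < Real.sinh ((v + w) / 2 * x) := Real.sinh_pos_iff.mpr (mul_pos hr hx)
  have p2 : 0 < Real.sinh ((v + w) / 2 * y) := Real.sinh_pos_iff.mpr (mul_pos hr hy)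
  have p3 : 0 < Real.sinh ((v - w) / 2 * x) := Real.sinh_pos_iff.mpr (mul_pos hs hx)
  have p4 : 0 < Real.sinh ((v - w) / 2 * y) := Real.sinh_pos_iff.mpr (mul_pos hs hy)
  have p5 : 0 < Real.sinh ((u + w) / 2 * x) := Real.sinh_pos_iff.mpr (mul_pos (hr.trans hpr) hx)
  have p6 : 0 < Real.sinh ((u - w) / 2 * x) := Real.sinh_pos_iff.mpr (mul_pos (hs.trans hsq) hx)
  rw [div_lt_div_iff₀ p1 p2] at hf
  rw [div_lt_div_iff₀ p3 p4] at hg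
  have main := mul_lt_mul'' hf hg (by positivity) (by positivity)
  rw [e1, e2, e3, e4]
  nlinarith [main]

lemma cosh_lt_cosh_mul {s t x : ℝ} (hs : 0 ≤ s) (hst : s < t) (hx : 0 < x) :
    Real.cosh (s * x) < Real.cosh (t * x) := by
  rw [Real.cosh_lt_cosh, abs_of_nonneg (mul_nonneg hs hx.le),
    abs_of_nonneg (mul_nonneg (hs.trans hst.le) hx.le)]
  exact mul_lt_mul_of_pos_right hst hx

/-- The function `L_{α,β,γ}` defined on `(0,+∞)`. -/
noncomputable def L (α β γ : ℝ) (x : ℝ) : ℝ :=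
  (Real.cosh (α * x) - Real.cosh (γ * x)) / (Real.cosh (β * x) - Real.cosh (γ * x))

lemma L_abs (α β γ x : ℝ) (hx : 0 ≤ x) : L α β γ x = L |α| |β| |γ| x := by
  have h : ∀ t : ℝ, Real.cosh (|t| * x) = Real.cosh (t * x) := fun t => by
    rw [show |t| * x = |t * x| by rw [abs_mul, abs_of_nonneg hx], Real.cosh_abs]
  unfold L
  rw [h, h, h]

/-- For `|α|, |β|, |γ|` pairwise distinct, the function
`x ↦ sgn((α²−β²)(α²−γ²)(β²−γ²)) · L_{α,β,γ}(x)` is strictly increasing on `(0,+∞)`. -/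
theorem sign_mul_L_strictMonoOn (α β γ : ℝ)
    (hab : |α| ≠ |β|) (hag : |α| ≠ |γ|) (hbg : |β| ≠ |γ|) :
    StrictMonoOn
      (fun x => Real.sign ((α ^ 2 - β ^ 2) * (α ^ 2 - γ ^ 2) * (β ^ 2 - γ ^ 2)) * L α β γ x)
      (Set.Ioi 0) := by
  intro x hx y hy hxy
  rw [Set.mem_Ioi] at hx hy
  simp only
  rw [L_abs α β γ x hx.le, L_abs α β γ y hy.le, ← sq_abs α, ← sq_abs β, ← sq_abs γ]
  set a := |α| with ha
  set b := |β| with hb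
  set c := |γ| with hc
  have ha0 : 0 ≤ a := abs_nonneg α
  have hb0 : 0 ≤ b := abs_nonneg β
  have hc0 : 0 ≤ c := abs_nonneg γ
  rcases hab.lt_or_gt with h1 | h1
  · rcases hbg.lt_or_gt with h2 | h2
    · -- a < b < c : case 4, sorted (u,v,w) = (c,b,a)
      have hMx := M_lt ha0 h1 h2 hx hy hxy
      have f1 : a ^ 2 < b ^ 2 := pow_lt_pow_left₀ (by linarith) (by linarith) two_ne_zero
      have f2 : a ^ 2 < c ^ 2 := pow_lt_pow_left₀ (by linarith) (by linarith) two_ne_zero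
      have f3 : b ^ 2 < c ^ 2 := pow_lt_pow_left₀ (by linarith) (by linarith) two_ne_zero
      have hsgn : Real.sign ((a ^ 2 - b ^ 2) * (a ^ 2 - c ^ 2) * (b ^ 2 - c ^ 2)) = -1 :=
        Real.sign_of_neg (mul_neg_of_pos_of_neg
          (mul_pos_of_neg_of_neg (by linarith) (by linarith)) (by linarith))
      unfold L
      have e : ∀ z : ℝ,
          (Real.cosh (a * z) - Real.cosh (c * z)) / (Real.cosh (b * z) - Real.cosh (c * z))
          = (Real.cosh (c * z) - Real.cosh (a * z)) / (Real.cosh (c * z) - Real.cosh (b * z)) := by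
        intro z
        rw [show Real.cosh (a * z) - Real.cosh (c * z)
            = -(Real.cosh (c * z) - Real.cosh (a * z)) by ring,
          show Real.cosh (b * z) - Real.cosh (c * z)
            = -(Real.cosh (c * z) - Real.cosh (b * z)) by ring, neg_div_neg_eq]
      rw [hsgn, e x, e y, neg_one_mul, neg_one_mul, neg_lt_neg_iff]
      have d1 : 0 < Real.cosh (c * x) - Real.cosh (b * x) :=
        sub_pos.mpr (cosh_lt_cosh_mul hb0 h2 hx)
      have d2 : 0 < Real.cosh (c * y) - Real.cosh (b * y) :=
        sub_pos.mpr (cosh_lt_cosh_mul hb0 h2 hy)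
      rw [div_lt_div_iff₀ d2 d1]
      linarith [hMx]
    · rcases hag.lt_or_gt with h3 | h3
      · -- a < c < b : case 6, sorted (u,v,w) = (b,c,a)
        have hMx := M_lt ha0 h3 h2 hx hy hxy
        have f1 : a ^ 2 < b ^ 2 := pow_lt_pow_left₀ (by linarith) (by linarith) two_ne_zero
        have f2 : a ^ 2 < c ^ 2 := pow_lt_pow_left₀ (by linarith) (by linarith) two_ne_zero
        have f3 : c ^ 2 < b ^ 2 := pow_lt_pow_left₀ (by linarith) (by linarith) two_ne_zero
        have hsgn : Real.sign ((a ^ 2 - b ^ 2) * (a ^ 2 - c ^ 2) * (b ^ 2 - c ^ 2)) = 1 :=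
          Real.sign_of_pos (mul_pos
            (mul_pos_of_neg_of_neg (by linarith) (by linarith)) (by linarith))
        unfold L
        have e : ∀ z : ℝ,
            (Real.cosh (a * z) - Real.cosh (c * z)) / (Real.cosh (b * z) - Real.cosh (c * z))
            = -((Real.cosh (c * z) - Real.cosh (a * z))
                / (Real.cosh (b * z) - Real.cosh (c * z))) := by
          intro z
          rw [show Real.cosh (a * z) - Real.cosh (c * z)
              = -(Real.cosh (c * z) - Real.cosh (a * z)) by ring, neg_div]
        rw [hsgn, e x, e y, one_mul, one_mul, neg_lt_neg_iff]
        have d1 : 0 < Real.cosh (b * x) - Real.cosh (c * x) :=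
          sub_pos.mpr (cosh_lt_cosh_mul hc0 h2 hx)
        have d2 : 0 < Real.cosh (b * y) - Real.cosh (c * y) :=
          sub_pos.mpr (cosh_lt_cosh_mul hc0 h2 hy)
        rw [div_lt_div_iff₀ d2 d1]
        linarith [hMx]
      · -- c < a < b : case 2, sorted (u,v,w) = (b,a,c)
        have hMx := M_lt hc0 h3 h1 hx hy hxy
        have f1 : a ^ 2 < b ^ 2 := pow_lt_pow_left₀ (by linarith) (by linarith) two_ne_zero
        have f2 : c ^ 2 < a ^ 2 := pow_lt_pow_left₀ (by linarith) (by linarith) two_ne_zero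
        have f3 : c ^ 2 < b ^ 2 := pow_lt_pow_left₀ (by linarith) (by linarith) two_ne_zero
        have hsgn : Real.sign ((a ^ 2 - b ^ 2) * (a ^ 2 - c ^ 2) * (b ^ 2 - c ^ 2)) = -1 :=
          Real.sign_of_neg (mul_neg_of_neg_of_pos
            (mul_neg_of_neg_of_pos (by linarith) (by linarith)) (by linarith))
        unfold L
        rw [hsgn, neg_one_mul, neg_one_mul, neg_lt_neg_iff]
        have n1 : 0 < Real.cosh (b * x) - Real.cosh (c * x) :=
          sub_pos.mpr (cosh_lt_cosh_mul hc0 (h3.trans h1) hx)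
        have n2 : 0 < Real.cosh (b * y) - Real.cosh (c * y) :=
          sub_pos.mpr (cosh_lt_cosh_mul hc0 (h3.trans h1) hy)
        rw [div_lt_div_iff₀ n2 n1]
        linarith [hMx]
  · rcases hag.lt_or_gt with h2 | h2
    · -- b < a < c : case 5, sorted (u,v,w) = (c,a,b)
      have hMx := M_lt hb0 h1 h2 hx hy hxy
      have f1 : b ^ 2 < a ^ 2 := pow_lt_pow_left₀ (by linarith) (by linarith) two_ne_zero
      have f2 : a ^ 2 < c ^ 2 := pow_lt_pow_left₀ (by linarith) (by linarith) two_ne_zero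
      have f3 : b ^ 2 < c ^ 2 := pow_lt_pow_left₀ (by linarith) (by linarith) two_ne_zero
      have hsgn : Real.sign ((a ^ 2 - b ^ 2) * (a ^ 2 - c ^ 2) * (b ^ 2 - c ^ 2)) = 1 :=
        Real.sign_of_pos (mul_pos_of_neg_of_neg
          (mul_neg_of_pos_of_neg (by linarith) (by linarith)) (by linarith))
      unfold L
      have e : ∀ z : ℝ,
          (Real.cosh (a * z) - Real.cosh (c * z)) / (Real.cosh (b * z) - Real.cosh (c * z))
          = (Real.cosh (c * z) - Real.cosh (a * z)) / (Real.cosh (c * z) - Real.cosh (b * z)) := by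
        intro z
        rw [show Real.cosh (a * z) - Real.cosh (c * z)
            = -(Real.cosh (c * z) - Real.cosh (a * z)) by ring,
          show Real.cosh (b * z) - Real.cosh (c * z)
            = -(Real.cosh (c * z) - Real.cosh (b * z)) by ring, neg_div_neg_eq]
      rw [hsgn, e x, e y, one_mul, one_mul]
      have n1 : 0 < Real.cosh (c * x) - Real.cosh (b * x) :=
        sub_pos.mpr (cosh_lt_cosh_mul hb0 (h1.trans h2) hx)
      have n2 : 0 < Real.cosh (c * y) - Real.cosh (b * y) :=
        sub_pos.mpr (cosh_lt_cosh_mul hb0 (h1.trans h2) hy)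
      rw [div_lt_div_iff₀ n1 n2]
      linarith [hMx]
    · rcases hbg.lt_or_gt with h3 | h3
      · -- b < c < a : case 3, sorted (u,v,w) = (a,c,b)
        have hMx := M_lt hb0 h3 h2 hx hy hxy
        have f1 : b ^ 2 < a ^ 2 := pow_lt_pow_left₀ (by linarith) (by linarith) two_ne_zero
        have f2 : c ^ 2 < a ^ 2 := pow_lt_pow_left₀ (by linarith) (by linarith) two_ne_zero
        have f3 : b ^ 2 < c ^ 2 := pow_lt_pow_left₀ (by linarith) (by linarith) two_ne_zero
        have hsgn : Real.sign ((a ^ 2 - b ^ 2) * (a ^ 2 - c ^ 2) * (b ^ 2 - c ^ 2)) = -1 :=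
          Real.sign_of_neg (mul_neg_of_pos_of_neg
            (mul_pos (by linarith) (by linarith)) (by linarith))
        unfold L
        have e : ∀ z : ℝ,
            (Real.cosh (a * z) - Real.cosh (c * z)) / (Real.cosh (b * z) - Real.cosh (c * z))
            = -((Real.cosh (a * z) - Real.cosh (c * z))
                / (Real.cosh (c * z) - Real.cosh (b * z))) := by
          intro z
          rw [show Real.cosh (b * z) - Real.cosh (c * z)
              = -(Real.cosh (c * z) - Real.cosh (b * z)) by ring, div_neg]
        rw [hsgn, e x, e y, neg_one_mul, neg_one_mul, neg_neg, neg_neg]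
        have d1 : 0 < Real.cosh (c * x) - Real.cosh (b * x) :=
          sub_pos.mpr (cosh_lt_cosh_mul hb0 h3 hx)
        have d2 : 0 < Real.cosh (c * y) - Real.cosh (b * y) :=
          sub_pos.mpr (cosh_lt_cosh_mul hb0 h3 hy)
        rw [div_lt_div_iff₀ d1 d2]
        linarith [hMx]
      · -- c < b < a : case 1, sorted (u,v,w) = (a,b,c)
        have hMx := M_lt hc0 h3 h1 hx hy hxy
        have f1 : b ^ 2 < a ^ 2 := pow_lt_pow_left₀ (by linarith) (by linarith) two_ne_zero
        have f2 : c ^ 2 < a ^ 2 := pow_lt_pow_left₀ (by linarith) (by linarith) two_ne_zero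
        have f3 : c ^ 2 < b ^ 2 := pow_lt_pow_left₀ (by linarith) (by linarith) two_ne_zero
        have hsgn : Real.sign ((a ^ 2 - b ^ 2) * (a ^ 2 - c ^ 2) * (b ^ 2 - c ^ 2)) = 1 :=
          Real.sign_of_pos (mul_pos (mul_pos (by linarith) (by linarith)) (by linarith))
        unfold L
        rw [hsgn, one_mul, one_mul]
        have d1 : 0 < Real.cosh (b * x) - Real.cosh (c * x) :=
          sub_pos.mpr (cosh_lt_cosh_mul hc0 h3 hx)
        have d2 : 0 < Real.cosh (b * y) - Real.cosh (c * y) :=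
          sub_pos.mpr (cosh_lt_cosh_mul hc0 h3 hy)
        rw [div_lt_div_iff₀ d1 d2]
        linarith [hMx]
end

section
/- Let r and q be real numbers with r ∉ {0,1} and q ≠ 0, and let F_{r,q}(x) = ((cosh(rx))^{q/r} − 1) / ((cosh x)^q − 1) for x > 0. If (r,q) belongs to {(u,v) : u < 0, v ≥ max(0, (2/3)(u+1))} \ {(−1,0)}, or {(u,v) : 0 < u < 1, v ≤ min(2u, (2/3)(u+1))} \ {(1/2,1)}, or {(u,v) : 1 < u, v ≥ max(2, (2/3)(u+1))} \ {(2,2)}, then F_{r,q} is strictly increasing on (0,+∞). -/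
/-- The function `F_{r,q}` defined on `(0,+∞)`. -/
noncomputable def Frq (r q : ℝ) (x : ℝ) : ℝ :=
  ((Real.cosh (r * x)) ^ (q / r) - 1) / ((Real.cosh x) ^ q - 1)

open Real

lemma complex_hasSum_sinh (z : ℂ) :
    HasSum (fun n : ℕ => z ^ (2 * n + 1) / (Nat.factorial (2 * n + 1) : ℂ)) (Complex.sinh z) := by
  have h := Complex.hasSum_sin (z * Complex.I)
  rw [Complex.sin_mul_I] at h
  have h2 : HasSum (fun n : ℕ => (z ^ (2 * n + 1) / (Nat.factorial (2 * n + 1) : ℂ)) * Complex.I)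
      (Complex.sinh z * Complex.I) := by
    convert h using 2 with n
    have hI : (Complex.I) ^ (2 * n + 1) = (-1) ^ n * Complex.I := by
      rw [pow_succ, pow_mul, Complex.I_sq]
    rw [mul_pow, hI]
    have h1 : ((-1 : ℂ)) ^ n * (-1 : ℂ) ^ n = 1 := by
      rw [← pow_add]; exact Even.neg_one_pow ⟨n, rfl⟩
    linear_combination (-(z ^ (2 * n + 1) * Complex.I) / ((Nat.factorial (2 * n + 1)) : ℂ)) * h1
  exact (hasSum_mul_right_iff Complex.I_ne_zero).mp h2

lemma real_hasSum_sinh (x : ℝ) :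
    HasSum (fun n : ℕ => x ^ (2 * n + 1) / (Nat.factorial (2 * n + 1) : ℝ)) (Real.sinh x) :=
  mod_cast complex_hasSum_sinh x

/-- Taylor coefficient (times `(2n+1)!`) of `DD`. -/
noncomputable def cc (r q : ℝ) (n : ℕ) : ℝ :=
  (q - 2) * r ^ (2 * n + 1) + (2 * r - q) - q * (r - 1) ^ (2 * n + 1)

/-- The auxiliary combination of `sinh`'s. -/
noncomputable def DD (r q x : ℝ) : ℝ :=
  (q - 2) * Real.sinh (r * x) + (2 * r - q) * Real.sinh x - q * Real.sinh ((r - 1) * x)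

lemma hasSum_DD (r q x : ℝ) :
    HasSum (fun n : ℕ => cc r q n * x ^ (2 * n + 1) / ((Nat.factorial (2 * n + 1)) : ℝ))
      (DD r q x) := by
  have h1 := (real_hasSum_sinh (r * x)).mul_left (q - 2)
  have h2 := (real_hasSum_sinh x).mul_left (2 * r - q)
  have h3 := (real_hasSum_sinh ((r - 1) * x)).mul_left q
  have h := (h1.add h2).sub h3
  convert h using 1
  · rfl
  · funext n
    rw [cc, mul_pow, mul_pow]
    ring
  · rfl

lemma DD_pos {r q : ℝ} (hcc : ∀ n : ℕ, 0 ≤ cc r q (n + 1)) {N : ℕ} (hN : 0 < cc r q N)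
    {x : ℝ} (hx : 0 < x) : 0 < DD r q x := by
  have hs := hasSum_DD r q x
  have hc0 : cc r q 0 = 0 := by rw [cc]; ring
  have hnn : ∀ n : ℕ, 0 ≤ cc r q n * x ^ (2 * n + 1) / ((Nat.factorial (2 * n + 1)) : ℝ) := by
    intro n
    have h1 : 0 ≤ cc r q n := by
      cases n with
      | zero => rw [hc0]
      | succ k => exact hcc k
    positivity
  have hterm : 0 < cc r q N * x ^ (2 * N + 1) / ((Nat.factorial (2 * N + 1)) : ℝ) := by
    have := Nat.factorial_pos (2 * N + 1)
    positivity
  have hle : cc r q N * x ^ (2 * N + 1) / ((Nat.factorial (2 * N + 1)) : ℝ) ≤ DD r q x := by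
    rw [← hs.tsum_eq]
    exact hs.summable.le_tsum N fun j _ => hnn j
  linarith

lemma pow_add_one_le {b : ℝ} (hb : 0 ≤ b) (m : ℕ) (hm : 1 ≤ m) :
    b ^ m + 1 ≤ (b + 1) ^ m := by
  induction m, hm using Nat.le_induction with
  | base => simp
  | succ k hk ih =>
    have h1 : 0 ≤ b ^ k := pow_nonneg hb k
    calc b ^ (k + 1) + 1 = b * b ^ k + 1 := by ring
      _ ≤ (b + 1) * (b ^ k + 1) := by nlinarith
      _ ≤ (b + 1) * (b + 1) ^ k := by nlinarith
      _ = (b + 1) ^ (k + 1) := by ring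

lemma mul_nonneg_np {a b : ℝ} (ha : a ≤ 0) (hb : b ≤ 0) : 0 ≤ a * b := by nlinarith

lemma E_nonneg {r : ℝ} (hr : (-1 ≤ r ∧ r ≤ 0) ∨ (1/2 ≤ r ∧ r ≤ 1) ∨ 2 ≤ r) :
    ∀ n : ℕ, 0 ≤ (r-2) * r^(2*n+3) + (r+1) * (1-r)^(2*n+3) + (2*r-1) := by
  intro n
  induction n with
  | zero =>
    have h0 : (r-2) * r^(2*0+3) + (r+1) * (1-r)^(2*0+3) + (2*r-1) = 0 := by ring
    linarith
  | succ k ih =>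
    have hkey : 0 ≤ (r-2)*(r+1)*r*(r-1)*(r^(2*k+2) - (1-r)^(2*k+2)) := by
      rcases hr with ⟨h1, h2⟩ | ⟨h1, h2⟩ | h1
      · have hd : r^(2*k+2) ≤ (1-r)^(2*k+2) := by
          have he : r^(2*k+2) = (-r)^(2*k+2) := (Even.neg_pow ⟨k+1, by ring⟩ r).symm
          rw [he]
          exact pow_le_pow_left₀ (by linarith) (by linarith) _
        have hc : (r-2)*(r+1)*r*(r-1) ≤ 0 := by
          have e : (r-2)*(r+1)*r*(r-1) = -(((2-r)*(1-r))*((-r)*(r+1))) := by ring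
          rw [e]
          have := mul_nonneg (mul_nonneg (by linarith : (0:ℝ) ≤ 2-r) (by linarith : (0:ℝ) ≤ 1-r))
            (mul_nonneg (by linarith : (0:ℝ) ≤ -r) (by linarith : (0:ℝ) ≤ r+1))
          linarith
        exact mul_nonneg_np hc (by linarith)
      · have hd : (1-r)^(2*k+2) ≤ r^(2*k+2) :=
          pow_le_pow_left₀ (by linarith) (by linarith) _
        have hc : 0 ≤ (r-2)*(r+1)*r*(r-1) := by
          have e : (r-2)*(r+1)*r*(r-1) = ((2-r)*(1-r))*(r*(r+1)) := by ring
          rw [e]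
          exact mul_nonneg (mul_nonneg (by linarith) (by linarith))
            (mul_nonneg (by linarith) (by linarith))
        exact mul_nonneg hc (by linarith)
      · have hd : (1-r)^(2*k+2) ≤ r^(2*k+2) := by
          have he : (1-r)^(2*k+2) = (r-1)^(2*k+2) := by
            rw [show (1-r) = -(r-1) by ring, Even.neg_pow ⟨k+1, by ring⟩]
          rw [he]
          exact pow_le_pow_left₀ (by linarith) (by linarith) _
        have hc : 0 ≤ (r-2)*(r+1)*r*(r-1) :=
          mul_nonneg (mul_nonneg (mul_nonneg (by linarith) (by linarith)) (by linarith))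
            (by linarith)
        exact mul_nonneg hc (by linarith)
    have hid : (r-2) * r^(2*(k+1)+3) + (r+1) * (1-r)^(2*(k+1)+3) + (2*r-1)
        = ((r-2) * r^(2*k+3) + (r+1) * (1-r)^(2*k+3) + (2*r-1))
          + (r-2)*(r+1)*r*(r-1)*(r^(2*k+2) - (1-r)^(2*k+2)) := by ring
    rw [hid]
    linarith

lemma cc_eq3 (r q : ℝ) (n : ℕ) :
    cc r q (n+1) = q * (r^(2*n+3) + (1-r)^(2*n+3) - 1) + 2*r - 2*r^(2*n+3) := by
  rw [cc]
  rw [show r - 1 = -(1-r) by ring, Odd.neg_pow ⟨n+1, by ring⟩]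
  ring

lemma cc_decomp3 (r q : ℝ) (n : ℕ) :
    cc r q (n+1) = (q - 2/3*(r+1)) * (r^(2*n+3) + (1-r)^(2*n+3) - 1)
      + 2/3 * ((r-2) * r^(2*n+3) + (r+1) * (1-r)^(2*n+3) + (2*r-1)) := by
  rw [cc_eq3]; ring

lemma coef3_nonneg_of_neg {r : ℝ} (hr : r ≤ 0) (n : ℕ) :
    0 ≤ r^(2*n+3) + (1-r)^(2*n+3) - 1 := by
  have h1 := pow_add_one_le (b := -r) (by linarith) (2*n+3) (by omega)
  rw [show -r + 1 = 1 - r by ring, Odd.neg_pow (⟨n+1, by ring⟩ : Odd (2*n+3))] at h1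
  linarith

lemma coef3_nonneg_of_ge1 {r : ℝ} (hr : 1 ≤ r) (n : ℕ) :
    0 ≤ r^(2*n+3) + (1-r)^(2*n+3) - 1 := by
  have h1 := pow_add_one_le (b := r - 1) (by linarith) (2*n+3) (by omega)
  rw [show r - 1 + 1 = r by ring] at h1
  rw [show (1-r) = -(r-1) by ring, Odd.neg_pow (⟨n+1, by ring⟩ : Odd (2*n+3))]
  linarith

lemma cc_nonneg_reg1 {r q : ℝ} (hr : r < 0) (hq0 : 0 ≤ q) (hq23 : 2/3*(r+1) ≤ q) :
    ∀ n : ℕ, 0 ≤ cc r q (n+1) := by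
  intro n
  have hcoef := coef3_nonneg_of_neg hr.le n
  rcases le_or_gt r (-1) with hr1 | hr1
  · rw [cc_eq3]
    have h2 : (-r)^(2*n+3) = -(r^(2*n+3)) := Odd.neg_pow ⟨n+1, by ring⟩ r
    have h1 : -r ≤ (-r)^(2*n+3) := by
      calc -r = (-r)^1 := (pow_one _).symm
        _ ≤ (-r)^(2*n+3) := pow_le_pow_right₀ (by linarith) (by omega)
    have h3 : 0 ≤ q * (r^(2*n+3) + (1-r)^(2*n+3) - 1) := mul_nonneg hq0 hcoef
    linarith
  · rw [cc_decomp3]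
    have hE := E_nonneg (Or.inl ⟨by linarith, hr.le⟩) n
    have h4 := mul_nonneg (by linarith : (0:ℝ) ≤ q - 2/3*(r+1)) hcoef
    linarith

lemma cc_nonneg_reg2 {r q : ℝ} (h0 : 0 < r) (h1 : r < 1) (hq2r : q ≤ 2*r)
    (hq23 : q ≤ 2/3*(r+1)) : ∀ n : ℕ, 0 ≤ cc r q (n+1) := by
  intro n
  have hA : r^(2*n+3) ≤ r := pow_le_of_le_one h0.le h1.le (by omega)
  have hB : (1-r)^(2*n+3) ≤ 1-r := pow_le_of_le_one (by linarith) (by linarith) (by omega)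
  have hcoef : r^(2*n+3) + (1-r)^(2*n+3) - 1 ≤ 0 := by linarith
  rcases le_or_gt q 0 with hq0 | hq0
  · rw [cc_eq3]
    have h2 : 0 ≤ q * (r^(2*n+3) + (1-r)^(2*n+3) - 1) :=
      mul_nonneg_np hq0 hcoef
    linarith
  rcases le_or_gt r (1/2) with hr2 | hr2
  · rw [cc_eq3]
    have hXY : r^(2*n+2) ≤ (1-r)^(2*n+2) := pow_le_pow_left₀ h0.le (by linarith) _
    have hid : 2*r * (r^(2*n+3) + (1-r)^(2*n+3) - 1) + 2*r - 2*r^(2*n+3)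
        = 2*(1-r)*r*((1-r)^(2*n+2) - r^(2*n+2)) := by ring
    have h3 : 0 ≤ (2*r - q) * (-(r^(2*n+3) + (1-r)^(2*n+3) - 1)) :=
      mul_nonneg (by linarith) (by linarith)
    have h4 : 0 ≤ 2*(1-r)*r*((1-r)^(2*n+2) - r^(2*n+2)) := by
      apply mul_nonneg (mul_nonneg (by linarith) h0.le) (by linarith)
    nlinarith [hid, h3, h4]
  · rw [cc_decomp3]
    have hE := E_nonneg (Or.inr (Or.inl ⟨by linarith, h1.le⟩)) n
    have h4 := mul_nonneg_np (by linarith : q - 2/3*(r+1) ≤ 0) hcoef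
    linarith

lemma cc_nonneg_reg3 {r q : ℝ} (h1 : 1 < r) (hq2 : 2 ≤ q) (hq23 : 2/3*(r+1) ≤ q) :
    ∀ n : ℕ, 0 ≤ cc r q (n+1) := by
  intro n
  have hcoef := coef3_nonneg_of_ge1 h1.le n
  rcases le_or_gt r 2 with hr2 | hr2
  · rw [cc_eq3]
    have ht : (r-1)^(2*n+3) ≤ r-1 := pow_le_of_le_one (by linarith) (by linarith) (by omega)
    have h5 : 1 - r ≤ (1-r)^(2*n+3) := by
      rw [show (1-r) = -(r-1) by ring, Odd.neg_pow (⟨n+1, by ring⟩ : Odd (2*n+3))]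
      linarith
    have h3 : 2 * (r^(2*n+3) + (1-r)^(2*n+3) - 1) ≤ q * (r^(2*n+3) + (1-r)^(2*n+3) - 1) :=
      mul_le_mul_of_nonneg_right hq2 hcoef
    linarith
  · rw [cc_decomp3]
    have hE := E_nonneg (Or.inr (Or.inr hr2.le)) n
    have h4 := mul_nonneg (by linarith : (0:ℝ) ≤ q - 2/3*(r+1)) hcoef
    linarith

lemma cc_one_eq (r q : ℝ) : cc r q 1 = r*(r-1)*(3*q - 2*(r+1)) := by rw [cc]; ring

lemma cc_two_boundary (r : ℝ) :
    cc r (2/3*(r+1)) 2 = 2/3*((r-2)*(r+1)*r*(r-1)*(2*r-1)) := by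
  rw [cc]; ring

lemma cc_exists_pos {r q : ℝ} (hr0 : r ≠ 0) (hr1 : r ≠ 1) (hq : q ≠ 0)
    (h : (r < 0 ∧ max 0 (2 / 3 * (r + 1)) ≤ q ∧ ¬(r = -1 ∧ q = 0)) ∨
         (0 < r ∧ r < 1 ∧ q ≤ min (2 * r) (2 / 3 * (r + 1)) ∧ ¬(r = 1 / 2 ∧ q = 1)) ∨
         (1 < r ∧ max 2 (2 / 3 * (r + 1)) ≤ q ∧ ¬(r = 2 ∧ q = 2))) :
    ∃ N, 0 < cc r q N := by
  by_cases hb : q = 2/3*(r+1)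
  · refine ⟨2, ?_⟩
    subst hb
    rw [cc_two_boundary]
    rcases h with ⟨h1, h2, h3⟩ | ⟨h1, h2, h3, h4⟩ | ⟨h1, h2, h3⟩
    · -- region 1 : r < 0 ; q = 2/3(r+1) > 0 since q ≠ 0 and q ≥ 0
      have hq0 : 0 < 2/3*(r+1) := lt_of_le_of_ne (le_trans (le_max_left _ _) h2) (Ne.symm hq)
      have hrm1 : -1 < r := by linarith
      have e : 2/3*((r-2)*(r+1)*r*(r-1)*(2*r-1))
          = 2/3*(((2-r)*(r+1))*(((-r)*(1-r))*(1-2*r))) := by ring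
      rw [e]
      have := mul_pos (mul_pos (by linarith : (0:ℝ) < 2-r) (by linarith : (0:ℝ) < r+1))
        (mul_pos (mul_pos (by linarith : (0:ℝ) < -r) (by linarith : (0:ℝ) < 1-r))
          (by linarith : (0:ℝ) < 1-2*r))
      linarith
    · -- region 2 : 1/2 < r < 1
      have hq2r : 2/3*(r+1) ≤ 2*r := le_trans h3 (min_le_left _ _)
      have hr12 : 1/2 ≤ r := by linarith
      have hrgt : 1/2 < r := by
        rcases lt_or_eq_of_le hr12 with h' | h'
        · exact h'
        · exfalso; exact h4 ⟨h'.symm, by rw [← h']; norm_num⟩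
      have e : 2/3*((r-2)*(r+1)*r*(r-1)*(2*r-1))
          = 2/3*(((2-r)*(r+1))*((r*(1-r))*(2*r-1))) := by ring
      rw [e]
      have := mul_pos (mul_pos (by linarith : (0:ℝ) < 2-r) (by linarith : (0:ℝ) < r+1))
        (mul_pos (mul_pos (by linarith : (0:ℝ) < r) (by linarith : (0:ℝ) < 1-r))
          (by linarith : (0:ℝ) < 2*r-1))
      linarith
    · -- region 3 : r > 2 (since q = 2/3(r+1) ≥ 2 gives r ≥ 2, r = 2 excluded)
      have hq2 : 2 ≤ 2/3*(r+1) := le_trans (le_max_left _ _) h2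
      have hr2 : 2 ≤ r := by linarith
      have hrgt : 2 < r := by
        rcases lt_or_eq_of_le hr2 with h' | h'
        · exact h'
        · exfalso; exact h3 ⟨h'.symm, by rw [← h']; norm_num⟩
      have := mul_pos (mul_pos (mul_pos (mul_pos
        (by linarith : (0:ℝ) < r-2) (by linarith : (0:ℝ) < r+1))
        (by linarith : (0:ℝ) < r)) (by linarith : (0:ℝ) < r-1))
        (by linarith : (0:ℝ) < 2*r-1)
      linarith
  · refine ⟨1, ?_⟩
    rw [cc_one_eq]
    rcases h with ⟨h1, h2, h3⟩ | ⟨h1, h2, h3, h4⟩ | ⟨h1, h2, h3⟩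
    · have h5 : 2/3*(r+1) ≤ q := le_trans (le_max_right _ _) h2
      have h6 : 2/3*(r+1) < q := lt_of_le_of_ne h5 (fun h' => hb h'.symm)
      have : 0 < r*(r-1) := mul_pos_of_neg_of_neg h1 (by linarith)
      nlinarith
    · have h5 : q ≤ 2/3*(r+1) := le_trans h3 (min_le_right _ _)
      have h6 : q < 2/3*(r+1) := lt_of_le_of_ne h5 hb
      have : 0 < r*(1-r) := mul_pos h1 (by linarith)
      nlinarith
    · have h5 : 2/3*(r+1) ≤ q := le_trans (le_max_right _ _) h2
      have h6 : 2/3*(r+1) < q := lt_of_le_of_ne h5 (fun h' => hb h'.symm)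
      have : 0 < r*(r-1) := mul_pos (by linarith) (by linarith)
      nlinarith

lemma cc_nonneg_all {r q : ℝ} (hr0 : r ≠ 0) (hr1 : r ≠ 1) (hq : q ≠ 0)
    (h : (r < 0 ∧ max 0 (2 / 3 * (r + 1)) ≤ q ∧ ¬(r = -1 ∧ q = 0)) ∨
         (0 < r ∧ r < 1 ∧ q ≤ min (2 * r) (2 / 3 * (r + 1)) ∧ ¬(r = 1 / 2 ∧ q = 1)) ∨
         (1 < r ∧ max 2 (2 / 3 * (r + 1)) ≤ q ∧ ¬(r = 2 ∧ q = 2))) :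
    ∀ n : ℕ, 0 ≤ cc r q (n+1) := by
  rcases h with ⟨h1, h2, h3⟩ | ⟨h1, h2, h3, h4⟩ | ⟨h1, h2, h3⟩
  · exact cc_nonneg_reg1 h1 (le_trans (le_max_left _ _) h2)
      (le_trans (le_max_right _ _) h2)
  · exact cc_nonneg_reg2 h1 h2 (le_trans h3 (min_le_left _ _))
      (le_trans h3 (min_le_right _ _))
  · exact cc_nonneg_reg3 h1 (le_trans (le_max_left _ _) h2)
      (le_trans (le_max_right _ _) h2)

noncomputable def fA (r q x : ℝ) : ℝ := Real.cosh (r*x) ^ (q/r - 1) * Real.sinh (r*x)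
noncomputable def fB (q x : ℝ) : ℝ := Real.cosh x ^ (q - 1) * Real.sinh x
noncomputable def dA (r q x : ℝ) : ℝ :=
  Real.cosh (r*x) ^ (q/r - 2) * ((q - r) * Real.sinh (r*x)^2 + r * Real.cosh (r*x)^2)
noncomputable def dB (q x : ℝ) : ℝ :=
  Real.cosh x ^ (q - 2) * ((q - 1) * Real.sinh x^2 + Real.cosh x^2)
noncomputable def ff (r q x : ℝ) : ℝ := Real.cosh (r*x) ^ (q/r) - 1
noncomputable def gg (q x : ℝ) : ℝ := Real.cosh x ^ q - 1

lemma hasDerivAt_cosh_rpow (a p x : ℝ) :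
    HasDerivAt (fun y => Real.cosh (a*y) ^ p)
      (Real.sinh (a*x) * a * p * Real.cosh (a*x) ^ (p-1)) x := by
  have h1 : HasDerivAt (fun y : ℝ => a*y) a x := by
    simpa using (hasDerivAt_id x).const_mul a
  exact h1.cosh.rpow_const (p := p) (Or.inl (Real.cosh_pos _).ne')

lemma hasDerivAt_sinh_mul (a x : ℝ) :
    HasDerivAt (fun y => Real.sinh (a*y)) (Real.cosh (a*x) * a) x := by
  have h1 : HasDerivAt (fun y : ℝ => a*y) a x := by
    simpa using (hasDerivAt_id x).const_mul a
  exact h1.sinh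

lemma cosh_rpow_succ (y p : ℝ) :
    Real.cosh y ^ (p + 1) = Real.cosh y ^ p * Real.cosh y := by
  rw [Real.rpow_add_one (Real.cosh_pos y).ne']

lemma hasDerivAt_fA (r q : ℝ) (hr0 : r ≠ 0) (x : ℝ) :
    HasDerivAt (fA r q) (dA r q x) x := by
  have h := (hasDerivAt_cosh_rpow r (q/r - 1) x).mul (hasDerivAt_sinh_mul r x)
  rw [show q/r - 1 - 1 = q/r - 2 by ring] at h
  convert h using 1 <;> try rfl
  rw [dA]
  rw [show q/r - 1 = q/r - 2 + 1 by ring, cosh_rpow_succ]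
  have hsc : (q/r - 1) * r = q - r := by field_simp
  linear_combination (-(Real.cosh (r*x) ^ (q/r - 2) * Real.sinh (r*x)^2)) * hsc

lemma hasDerivAt_fB (q x : ℝ) : HasDerivAt (fB q) (dB q x) x := by
  have h := ((Real.hasDerivAt_cosh x).rpow_const (p := q - 1)
    (Or.inl (Real.cosh_pos x).ne')).mul (Real.hasDerivAt_sinh x)
  rw [show q - 1 - 1 = q - 2 by ring] at h
  convert h using 1 <;> try rfl
  rw [dB]
  rw [show q - 1 = q - 2 + 1 by ring, cosh_rpow_succ]
  ring

lemma hasDerivAt_ff (r q : ℝ) (hr0 : r ≠ 0) (x : ℝ) :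
    HasDerivAt (ff r q) (q * fA r q x) x := by
  have h := (hasDerivAt_cosh_rpow r (q/r) x).sub_const 1
  convert h using 1 <;> try rfl
  rw [fA]
  have hsc : q/r * r = q := div_mul_cancel₀ q hr0
  linear_combination (-(Real.cosh (r*x) ^ (q/r - 1) * Real.sinh (r*x))) * hsc

lemma hasDerivAt_gg (q x : ℝ) : HasDerivAt (gg q) (q * fB q x) x := by
  have h := ((Real.hasDerivAt_cosh x).rpow_const (p := q)
    (Or.inl (Real.cosh_pos x).ne')).sub_const 1
  convert h using 1 <;> try rfl
  rw [fB]
  rw [show q - 1 = q - 1 + 0 by ring]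
  ring

lemma num_eq (r q : ℝ) (x : ℝ) :
    dA r q x * fB q x - fA r q x * dB q x
      = Real.cosh (r*x) ^ (q/r - 2) * Real.cosh x ^ (q - 2) * (DD r q (2*x) / 4) := by
  rw [dA, fB, fA, dB, DD]
  rw [show r*(2*x) = 2*(r*x) by ring, show (r-1)*(2*x) = 2*(r*x) - 2*x by ring,
    Real.sinh_sub, Real.sinh_two_mul, Real.sinh_two_mul, Real.cosh_two_mul, Real.cosh_two_mul]
  rw [show q - 1 = q - 2 + 1 by ring, cosh_rpow_succ,
    show q/r - 1 = q/r - 2 + 1 by ring, cosh_rpow_succ]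
  linear_combination
    (Real.cosh (r*x) ^ (q/r - 2) * Real.cosh x ^ (q - 2) *
      ((r - q/2) * Real.sinh x * Real.cosh x)) * Real.cosh_sq (r*x)
    + (Real.cosh (r*x) ^ (q/r - 2) * Real.cosh x ^ (q - 2) *
      ((q/2 - 1) * Real.sinh (r*x) * Real.cosh (r*x))) * Real.cosh_sq x

lemma fB_pos (q : ℝ) {x : ℝ} (hx : 0 < x) : 0 < fB q x :=
  mul_pos (Real.rpow_pos_of_pos (Real.cosh_pos x) _) (by rwa [Real.sinh_pos_iff])

lemma R_strictMono (r q : ℝ) (hr0 : r ≠ 0) (hDD : ∀ y, 0 < y → 0 < DD r q y) :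
    StrictMonoOn (fun x => fA r q x / fB q x) (Set.Ioi (0:ℝ)) := by
  have hderiv : ∀ x ∈ Set.Ioi (0:ℝ), HasDerivAt (fun x => fA r q x / fB q x)
      ((dA r q x * fB q x - fA r q x * dB q x) / (fB q x)^2) x := fun x hx =>
    (hasDerivAt_fA r q hr0 x).div (hasDerivAt_fB q x) (fB_pos q hx).ne'
  apply strictMonoOn_of_deriv_pos (convex_Ioi 0)
  · exact fun x hx => (hderiv x hx).continuousAt.continuousWithinAt
  · intro x hx
    rw [interior_Ioi] at hx
    rw [(hderiv x hx).deriv]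
    apply div_pos
    · rw [num_eq r q]
      have h1 := hDD (2*x) (by simpa using mul_pos two_pos (Set.mem_Ioi.mp hx))
      exact mul_pos (mul_pos (Real.rpow_pos_of_pos (Real.cosh_pos _) _)
        (Real.rpow_pos_of_pos (Real.cosh_pos _) _)) (by linarith)
    · exact pow_pos (fB_pos q hx) 2

lemma q_gg_pos {q : ℝ} (hq : q ≠ 0) {x : ℝ} (hx : 0 < x) : 0 < q * gg q x := by
  have hy : 1 < Real.cosh x := Real.one_lt_cosh.mpr hx.ne'
  rw [gg]
  rcases lt_or_gt_of_ne hq with h | h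
  · have h2 : Real.cosh x ^ q < 1 := Real.rpow_lt_one_of_one_lt_of_neg hy h
    nlinarith
  · have h2 : 1 < Real.cosh x ^ q :=
      (Real.one_lt_rpow_iff_of_pos (by linarith)).mpr (Or.inl ⟨hy, h⟩)
    nlinarith

/-- Sufficient conditions on `(r,q)` for `F_{r,q}` to be strictly increasing
on `(0,+∞)`. -/
theorem Frq_strictMonoOn (r q : ℝ) (hr0 : r ≠ 0) (hr1 : r ≠ 1) (hq : q ≠ 0)
    (h : (r < 0 ∧ max 0 (2 / 3 * (r + 1)) ≤ q ∧ ¬(r = -1 ∧ q = 0)) ∨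
         (0 < r ∧ r < 1 ∧ q ≤ min (2 * r) (2 / 3 * (r + 1)) ∧ ¬(r = 1 / 2 ∧ q = 1)) ∨
         (1 < r ∧ max 2 (2 / 3 * (r + 1)) ≤ q ∧ ¬(r = 2 ∧ q = 2))) :
    StrictMonoOn (Frq r q) (Set.Ioi 0) := by
  obtain ⟨N, hN⟩ := cc_exists_pos hr0 hr1 hq h
  have hcc := cc_nonneg_all hr0 hr1 hq h
  have hDD : ∀ y : ℝ, 0 < y → 0 < DD r q y := fun y hy => DD_pos hcc hN hy
  have hR := R_strictMono r q hr0 hDD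
  have hgg : ∀ x : ℝ, 0 < x → gg q x ≠ 0 := by
    intro x hx h0
    have h1 := q_gg_pos hq hx
    rw [h0, mul_zero] at h1
    exact lt_irrefl 0 h1
  have hFrq : Frq r q = fun x => ff r q x / gg q x := rfl
  have hderivF : ∀ x : ℝ, 0 < x → HasDerivAt (Frq r q)
      ((q * fA r q x * gg q x - ff r q x * (q * fB q x)) / (gg q x)^2) x := by
    intro x hx
    rw [hFrq]
    exact (hasDerivAt_ff r q hr0 x).div (hasDerivAt_gg q x) (hgg x hx)
  apply strictMonoOn_of_deriv_pos (convex_Ioi 0)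
  · exact fun x hx => (hderivF x (Set.mem_Ioi.mp hx)).continuousAt.continuousWithinAt
  · intro x hx
    rw [interior_Ioi] at hx
    replace hx : 0 < x := Set.mem_Ioi.mp hx
    rw [(hderivF x hx).deriv]
    apply div_pos
    · -- numerator positive via Cauchy MVT
      obtain ⟨c, hc, hmvt⟩ := exists_ratio_hasDerivAt_eq_ratio_slope
        (ff r q) (fun t => q * fA r q t) hx
        (fun t _ => (hasDerivAt_ff r q hr0 t).continuousAt.continuousWithinAt)
        (fun t _ => hasDerivAt_ff r q hr0 t)
        (gg q) (fun t => q * fB q t)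
        (fun t _ => (hasDerivAt_gg q t).continuousAt.continuousWithinAt)
        (fun t _ => hasDerivAt_gg q t)
      have hff0 : ff r q 0 = 0 := by
        rw [ff, mul_zero, Real.cosh_zero, Real.one_rpow, sub_self]
      have hgg0 : gg q 0 = 0 := by
        rw [gg, Real.cosh_zero, Real.one_rpow, sub_self]
      rw [hff0, hgg0, sub_zero, sub_zero] at hmvt
      have hc0 : 0 < c := hc.1
      have hcx : c < x := hc.2
      have hmvt2 : gg q x * fA r q c = ff r q x * fB q c := by
        apply mul_left_cancel₀ hq
        linear_combination hmvt
      have hRlt := hR (Set.mem_Ioi.mpr hc0) (Set.mem_Ioi.mpr hx) hcx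
      have hlt : fA r q c * fB q x < fA r q x * fB q c := by
        rw [div_lt_div_iff₀ (fB_pos q hc0) (fB_pos q hx)] at hRlt
        linarith
      have h5 : 0 < (q * fA r q x * gg q x - ff r q x * (q * fB q x)) * fB q c := by
        have e : (q * fA r q x * gg q x - ff r q x * (q * fB q x)) * fB q c
            = (q * gg q x) * (fA r q x * fB q c - fA r q c * fB q x) := by
          linear_combination (q * fB q x) * hmvt2
        rw [e]
        exact mul_pos (q_gg_pos hq hx) (by linarith)
      have h6 := div_pos h5 (fB_pos q hc0)
      rwa [mul_div_cancel_right₀ _ (fB_pos q hc0).ne'] at h6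
    · exact pow_two_pos_of_ne_zero (hgg x hx)
end

section
/- Let q > 0 be a real number, and for x > 0 and t > 1 let R_q(x,t) = (t−1)coth((t−1)x) − (q+1)tanh(x) + (q−t)tanh(tx). Define 𝒜_q = {t > 1 : for every x > 0, the partial derivative ∂R_q/∂t(x,t) is negative}. Then 𝒜_q = [1 + (3/4)(q−2), +∞) if q > 2, and 𝒜_q = (1, +∞) if 0 < q ≤ 2. -/
open Real Set

/-- The function `R_q(x,t)` defined for `x > 0`, `t > 1`. -/
noncomputable def Rq (q x t : ℝ) : ℝ :=
  (t - 1) * (Real.cosh ((t - 1) * x) / Real.sinh ((t - 1) * x)) -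
    (q + 1) * Real.tanh x + (q - t) * Real.tanh (t * x)


/-- helper: a function vanishing at 0 with positive derivative on `(0,∞)` is positive. -/
lemma aux_pos {f f' : ℝ → ℝ} (hd : ∀ y, HasDerivAt f (f' y) y) (h0 : f 0 = 0)
    (hp : ∀ y, 0 < y → 0 < f' y) {a : ℝ} (ha : 0 < a) : 0 < f a := by
  have hmono : StrictMonoOn f (Ici 0) := by
    apply strictMonoOn_of_deriv_pos (convex_Ici 0)
    · exact fun y _ => (hd y).continuousAt.continuousWithinAt
    · intro y hy
      rw [interior_Ici, mem_Ioi] at hy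
      rw [(hd y).deriv]
      exact hp y hy
  have := hmono (self_mem_Ici) (mem_Ici.2 ha.le) ha
  rwa [h0] at this

lemma sinh_lt_mul_cosh {a : ℝ} (ha : 0 < a) : Real.sinh a < a * Real.cosh a := by
  have h : 0 < a * Real.cosh a - Real.sinh a := by
    apply aux_pos (f' := fun y => y * Real.sinh y) (fun y => ?_) (by simp) (fun y hy => ?_) ha
    · have := ((hasDerivAt_id y).mul (Real.hasDerivAt_cosh y)).sub (Real.hasDerivAt_sinh y)
      convert this using 1
      all_goals first | rfl | (simp only [id_eq]; ring)
    · exact mul_pos hy (sinh_pos_iff.2 hy)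
  linarith

lemma two_cosh_lt {a : ℝ} (ha : 0 < a) : 2 * Real.cosh a - 2 < a * Real.sinh a := by
  have h : 0 < a * Real.sinh a - 2 * Real.cosh a + 2 := by
    apply aux_pos (f' := fun y => y * Real.cosh y - Real.sinh y) (fun y => ?_) (by simp)
      (fun y hy => by linarith [sinh_lt_mul_cosh hy]) ha
    · have := (((hasDerivAt_id y).mul (Real.hasDerivAt_sinh y)).sub
        ((Real.hasDerivAt_cosh y).const_mul 2)).add_const 2
      convert this using 1
      all_goals first | rfl | (simp only [id_eq]; ring)
    
  linarith

lemma three_sinh_lt {a : ℝ} (ha : 0 < a) : 3 * Real.sinh a < a * Real.cosh a + 2 * a := by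
  have h : 0 < a * Real.cosh a + 2 * a - 3 * Real.sinh a := by
    apply aux_pos (f' := fun y => y * Real.sinh y - 2 * Real.cosh y + 2) (fun y => ?_) (by simp)
      (fun y hy => by linarith [two_cosh_lt hy]) ha
    · have := (((hasDerivAt_id y).mul (Real.hasDerivAt_cosh y)).add
        ((hasDerivAt_id y).const_mul 2)).sub ((Real.hasDerivAt_sinh y).const_mul 3)
      convert this using 1
      all_goals first | rfl | (simp only [id_eq]; ring)
  linarith

lemma quad_lt_cosh {a : ℝ} (ha : 0 < a) : 1 + a ^ 2 / 2 < Real.cosh a := by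
  have h : 0 < Real.cosh a - 1 - a ^ 2 / 2 := by
    apply aux_pos (f' := fun y => Real.sinh y - y) (fun y => ?_) (by simp)
      (fun y hy => by linarith [Real.self_lt_sinh_iff.2 hy]) ha
    · have := ((Real.hasDerivAt_cosh y).sub_const 1).sub
        (((hasDerivAt_id y).pow 2).div_const 2)
      convert this using 1
      all_goals first | rfl | (simp only [id_eq]; ring_nf)
  linarith

lemma cubic_lt_sinh {a : ℝ} (ha : 0 < a) : a + a ^ 3 / 6 < Real.sinh a := by
  have h : 0 < Real.sinh a - a - a ^ 3 / 6 := by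
    apply aux_pos (f' := fun y => Real.cosh y - 1 - y ^ 2 / 2) (fun y => ?_) (by simp)
      (fun y hy => by linarith [quad_lt_cosh hy]) ha
    · have := ((Real.hasDerivAt_sinh y).sub (hasDerivAt_id y)).sub
        (((hasDerivAt_id y).pow 3).div_const 6)
      convert this using 1
      all_goals first | rfl | (simp only [id_eq]; ring_nf)
  linarith


/-- key rational bound: `sinh a (cosh b - 1) ≥ sinh b (cosh a - 1)` for `0 ≤ a ≤ b`. -/
lemma sinh_mul_cosh_le {a b : ℝ} (ha : 0 ≤ a) (hab : a ≤ b) :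
    Real.sinh b * (Real.cosh a - 1) ≤ Real.sinh a * (Real.cosh b - 1) := by
  have hid : Real.sinh b = Real.sinh a * Real.cosh (b - a) + Real.cosh a * Real.sinh (b - a) := by
    have := Real.sinh_add a (b - a)
    simpa using this
  have h1 : 0 ≤ Real.sinh a := by simpa using Real.sinh_le_sinh.2 ha
  have h2 : 0 ≤ Real.sinh (b - a) := by simpa using Real.sinh_le_sinh.2 (by linarith : (0:ℝ) ≤ b - a)
  have h3 : 1 ≤ Real.cosh a := Real.one_le_cosh a
  have h4 : 1 ≤ Real.cosh (b - a) := Real.one_le_cosh _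
  -- sinh a (cosh b - 1) - sinh b (cosh a - 1) = sinh b - sinh a - sinh (b-a) ≥ 0
  have hid2 : Real.sinh a * Real.cosh b - Real.sinh b * Real.cosh a = - Real.sinh (b - a) := by
    rw [← Real.sinh_neg, neg_sub, Real.sinh_sub]; ring
  nlinarith [hid, hid2]

/-- The main two-variable inequality `P(a,b) > 0` for `0 < a ≤ b`. -/
lemma P_pos {a b : ℝ} (ha : 0 < a) (hab : a ≤ b) :
    3 * (Real.sinh a - a) * (Real.cosh b + 1) <
      (3 * Real.sinh b - 3 * b + 2 * a) * (Real.cosh a - 1) := by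
  set F : ℝ → ℝ := fun y =>
    (3 * Real.sinh y - 3 * y + 2 * a) * (Real.cosh a - 1) -
      3 * (Real.sinh a - a) * (Real.cosh y + 1) with hF
  have hFd : ∀ y, HasDerivAt F
      ((3 * Real.cosh y - 3) * (Real.cosh a - 1) - 3 * (Real.sinh a - a) * Real.sinh y) y := by
    intro y
    have h1 : HasDerivAt (fun y => (3 * Real.sinh y - 3 * y + 2 * a) * (Real.cosh a - 1))
        ((3 * Real.cosh y - 3) * (Real.cosh a - 1)) y := by
      have := ((((Real.hasDerivAt_sinh y).const_mul 3).sub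
        ((hasDerivAt_id y).const_mul 3)).add_const (2 * a)).mul_const (Real.cosh a - 1)
      convert this using 1
      all_goals first | rfl | (simp only [id_eq]; ring_nf) | ring_nf
    have h2 : HasDerivAt (fun y => 3 * (Real.sinh a - a) * (Real.cosh y + 1))
        (3 * (Real.sinh a - a) * Real.sinh y) y :=
      ((Real.hasDerivAt_cosh y).add_const 1).const_mul _
    exact h1.sub h2
  -- F a > 0
  have hsa : 0 < Real.sinh a := Real.sinh_pos_iff.2 ha
  have hca : 1 < Real.cosh a := by nlinarith [Real.cosh_sq a, Real.cosh_pos a]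
  have hFa : 0 < F a := by
    have := three_sinh_lt ha
    simp only [hF]
    nlinarith
  -- derivative positive for y ≥ a
  have hderiv : ∀ y, a ≤ y →
      0 < (3 * Real.cosh y - 3) * (Real.cosh a - 1) - 3 * (Real.sinh a - a) * Real.sinh y := by
    intro y hy
    have hsy : 0 < Real.sinh y := Real.sinh_pos_iff.2 (lt_of_lt_of_le ha hy)
    have k1 : Real.sinh y * (Real.cosh a - 1) ≤ Real.sinh a * (Real.cosh y - 1) :=
      sinh_mul_cosh_le ha.le hy
    have k2 : Real.sinh a * (Real.sinh a - a) < (Real.cosh a - 1) ^ 2 := by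
      have := two_cosh_lt ha
      nlinarith [Real.cosh_sq a]
    have hsla : 0 < Real.sinh a - a := by linarith [Real.self_lt_sinh_iff.2 ha]
    -- multiply k1 by (cosh a - 1) ≥ 0 and use k2 with sinh y > 0, divide by sinh a > 0
    nlinarith [mul_le_mul_of_nonneg_right k1 (by linarith : (0:ℝ) ≤ Real.cosh a - 1),
      mul_lt_mul_of_pos_left k2 hsy]
  rcases eq_or_lt_of_le hab with rfl | hlt
  · simpa [hF] using hFa
  · have hmono : StrictMonoOn F (Ici a) := by
      apply strictMonoOn_of_deriv_pos (convex_Ici a)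
      · exact fun y _ => (hFd y).continuousAt.continuousWithinAt
      · intro y hy
        rw [interior_Ici, mem_Ioi] at hy
        rw [(hFd y).deriv]
        exact hderiv y hy.le
    have := hmono (self_mem_Ici) (mem_Ici.2 hab) hlt
    have : 0 < F b := lt_trans hFa this
    simp only [hF] at this
    linarith

/-- The inequality in the variables `u < v`. -/
lemma Q_lt {u v : ℝ} (hu : 0 < u) (huv : u < v) :
    (Real.sinh u * Real.cosh u - u) * Real.cosh v ^ 2 <
      (Real.sinh v * Real.cosh v - v + 2 * u / 3) * Real.sinh u ^ 2 := by
  have hP := P_pos (a := 2 * u) (b := 2 * v) (by linarith) (by linarith)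
  rw [Real.sinh_two_mul, Real.sinh_two_mul, Real.cosh_two_mul, Real.cosh_two_mul] at hP
  rw [Real.sinh_sq u, Real.sinh_sq v] at hP
  rw [Real.sinh_sq u]
  linarith [hP]


lemma deriv_Rq (q x t : ℝ) (hx : 0 < x) (ht : 1 < t) :
    deriv (fun t' => Rq q x t') t =
      Real.cosh ((t - 1) * x) / Real.sinh ((t - 1) * x)
        - (t - 1) * x / Real.sinh ((t - 1) * x) ^ 2
        - Real.sinh (t * x) / Real.cosh (t * x)
        + (q - t) * x / Real.cosh (t * x) ^ 2 := by
  have hu : 0 < (t - 1) * x := mul_pos (by linarith) hx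
  have hsu : 0 < Real.sinh ((t - 1) * x) := Real.sinh_pos_iff.2 hu
  have hcv : 0 < Real.cosh (t * x) := Real.cosh_pos _
  set u := (t - 1) * x with hudef
  set v := t * x with hvdef
  -- derivative of inner affine maps
  have hA : HasDerivAt (fun t' : ℝ => (t' - 1) * x) x t := by
    have := ((hasDerivAt_id t).sub_const 1).mul_const x
    simpa using this
  have hB : HasDerivAt (fun t' : ℝ => t' * x) x t := by
    simpa using (hasDerivAt_id t).mul_const x
  have hsinhu : HasDerivAt (fun t' => Real.sinh ((t' - 1) * x)) (Real.cosh u * x) t :=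
    HasDerivAt.comp (h₂ := Real.sinh) t (Real.hasDerivAt_sinh u) hA
  have hcoshu : HasDerivAt (fun t' => Real.cosh ((t' - 1) * x)) (Real.sinh u * x) t :=
    HasDerivAt.comp (h₂ := Real.cosh) t (Real.hasDerivAt_cosh u) hA
  have hsinhv : HasDerivAt (fun t' => Real.sinh (t' * x)) (Real.cosh v * x) t :=
    HasDerivAt.comp (h₂ := Real.sinh) t (Real.hasDerivAt_sinh v) hB
  have hcoshv : HasDerivAt (fun t' => Real.cosh (t' * x)) (Real.sinh v * x) t :=
    HasDerivAt.comp (h₂ := Real.cosh) t (Real.hasDerivAt_cosh v) hB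
  have hcoth : HasDerivAt (fun t' => Real.cosh ((t' - 1) * x) / Real.sinh ((t' - 1) * x))
      ((Real.sinh u * x * Real.sinh u - Real.cosh u * (Real.cosh u * x)) / Real.sinh u ^ 2) t :=
    hcoshu.div hsinhu hsu.ne'
  have h1 : HasDerivAt (fun t' : ℝ => (t' - 1) *
      (Real.cosh ((t' - 1) * x) / Real.sinh ((t' - 1) * x)))
      (1 * (Real.cosh u / Real.sinh u) + (t - 1) *
        ((Real.sinh u * x * Real.sinh u - Real.cosh u * (Real.cosh u * x)) / Real.sinh u ^ 2)) t :=
    ((hasDerivAt_id t).sub_const 1).mul hcoth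
  have htanhv : HasDerivAt (fun t' => Real.tanh (t' * x))
      ((Real.cosh v * x * Real.cosh v - Real.sinh v * (Real.sinh v * x)) / Real.cosh v ^ 2) t := by
    have hdiv : HasDerivAt (fun t' => Real.sinh (t' * x) / Real.cosh (t' * x))
        ((Real.cosh v * x * Real.cosh v - Real.sinh v * (Real.sinh v * x)) / Real.cosh v ^ 2) t :=
      hsinhv.div hcoshv hcv.ne'
    have : (fun t' => Real.tanh (t' * x)) = fun t' => Real.sinh (t' * x) / Real.cosh (t' * x) := by
      funext y; exact Real.tanh_eq_sinh_div_cosh _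
    rw [this]
    exact hdiv
  have h3 : HasDerivAt (fun t' : ℝ => (q - t') * Real.tanh (t' * x))
      ((-1) * Real.tanh v + (q - t) *
        ((Real.cosh v * x * Real.cosh v - Real.sinh v * (Real.sinh v * x)) / Real.cosh v ^ 2)) t := by
    have hqt : HasDerivAt (fun t' : ℝ => q - t') (-1) t := by
      simpa using (hasDerivAt_id t).const_sub q
    exact hqt.mul htanhv
  have htotal : HasDerivAt (fun t' => Rq q x t')
      ((1 * (Real.cosh u / Real.sinh u) + (t - 1) *
        ((Real.sinh u * x * Real.sinh u - Real.cosh u * (Real.cosh u * x)) / Real.sinh u ^ 2))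
       - 0
       + ((-1) * Real.tanh v + (q - t) *
        ((Real.cosh v * x * Real.cosh v - Real.sinh v * (Real.sinh v * x)) / Real.cosh v ^ 2))) t := by
    have h2 : HasDerivAt (fun _ : ℝ => (q + 1) * Real.tanh x) 0 t := hasDerivAt_const _ _
    exact (h1.sub h2).add h3
  rw [htotal.deriv]
  have hcs : Real.cosh u ^ 2 - Real.sinh u ^ 2 = 1 := Real.cosh_sq_sub_sinh_sq u
  have hcs' : Real.cosh v ^ 2 - Real.sinh v ^ 2 = 1 := Real.cosh_sq_sub_sinh_sq v
  have e1 : Real.sinh u * x * Real.sinh u - Real.cosh u * (Real.cosh u * x) = -((t - 1) * x) +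
      ((t - 1) * x - x) := by linear_combination (-x) * hcs
  have e2 : Real.cosh v * x * Real.cosh v - Real.sinh v * (Real.sinh v * x) = x := by
    linear_combination x * hcs'
  rw [Real.tanh_eq_sinh_div_cosh, e2]
  have e1' : Real.sinh u * x * Real.sinh u - Real.cosh u * (Real.cosh u * x) = -x := by
    linear_combination (-x) * hcs
  rw [e1']
  ring


/-- Sufficiency: if `q ≤ (4t+2)/3` then the derivative is negative. -/
lemma deriv_neg_of_le (q x t : ℝ) (hx : 0 < x) (ht : 1 < t) (hq : q ≤ (4 * t + 2) / 3) :
    deriv (fun t' => Rq q x t') t < 0 := by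
  rw [deriv_Rq q x t hx ht]
  set u := (t - 1) * x with hudef
  set v := t * x with hvdef
  have hu : 0 < u := mul_pos (by linarith) hx
  have huv : u < v := by simp only [hudef, hvdef]; nlinarith
  have hsu : 0 < Real.sinh u := Real.sinh_pos_iff.2 hu
  have hcv : 0 < Real.cosh v := Real.cosh_pos _
  have key := Q_lt hu huv
  have hle : (q - t) * x ≤ v - 2 * u / 3 := by
    simp only [hudef, hvdef]; nlinarith
  have hform : Real.cosh u / Real.sinh u - u / Real.sinh u ^ 2
      - Real.sinh v / Real.cosh v + (q - t) * x / Real.cosh v ^ 2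
      = ((Real.sinh u * Real.cosh u - u) * Real.cosh v ^ 2
          - (Real.sinh v * Real.cosh v - (q - t) * x) * Real.sinh u ^ 2)
        / (Real.sinh u ^ 2 * Real.cosh v ^ 2) := by
    field_simp
    ring
  rw [show (t - 1) * x / Real.sinh u ^ 2 = u / Real.sinh u ^ 2 from rfl, hform]
  apply div_neg_of_neg_of_pos
  · have h2 : Real.sinh u ^ 2 * ((q - t) * x) ≤ Real.sinh u ^ 2 * (v - 2 * u / 3) :=
      mul_le_mul_of_nonneg_left hle (sq_nonneg _)
    nlinarith [key]
  · positivity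

set_option maxHeartbeats 1000000 in
/-- Necessity: if `q > (4t+2)/3` then the derivative is positive for suitable small `x`. -/
lemma exists_deriv_pos (q t : ℝ) (ht : 1 < t) (hq : (4 * t + 2) / 3 < q) :
    ∃ x : ℝ, 0 < x ∧ 0 < deriv (fun t' => Rq q x t') t := by
  have hqt : t < q := by linarith
  set ε := q - (4 * t + 2) / 3 with hε
  clear_value ε
  set C := 2 * (t - 1) ^ 3 / 3 + (q - t) * t ^ 2 with hC
  clear_value C
  have hε0 : 0 < ε := by rw [hε]; linarith
  have hC0 : 0 < C := by
    rw [hC]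
    have h1 : 0 < t - 1 := by linarith
    have h2 : 0 < q - t := by linarith
    have h3 : 0 < t := by linarith
    positivity
  obtain ⟨x, hx0, hx1, hx2⟩ : ∃ x : ℝ, 0 < x ∧ x ≤ 1 ∧ x * (2 * C) ≤ ε :=
    ⟨min 1 (ε / (2 * C)), lt_min one_pos (div_pos hε0 (by linarith)), min_le_left _ _,
      (le_div_iff₀ (by linarith : (0:ℝ) < 2 * C)).1 (min_le_right _ _)⟩
  have hlast : 0 < ε * x - C * x ^ 3 := by
    have h2C := mul_le_mul_of_nonneg_right hx2 hx0.le
    have hCx3 := mul_le_mul_of_nonneg_left hx1 (mul_nonneg hC0.le (sq_nonneg x))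
    have hCx2 : 0 < C * x ^ 2 := mul_pos hC0 (pow_pos hx0 2)
    nlinarith [h2C, hCx3, hCx2]
  refine ⟨x, hx0, ?_⟩
  rw [deriv_Rq q x t hx0 ht]
  set u := (t - 1) * x with hudef
  set v := t * x with hvdef
  clear_value u v
  have hu : 0 < u := hudef ▸ mul_pos (by linarith : (0:ℝ) < t - 1) hx0
  have hv : 0 < v := hvdef ▸ mul_pos (by linarith : (0:ℝ) < t) hx0
  have hsu : 0 < Real.sinh u := Real.sinh_pos_iff.2 hu
  have hcu : 0 < Real.cosh u := Real.cosh_pos _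
  have hcv : 0 < Real.cosh v := Real.cosh_pos _
  -- bound 1 : coth part
  have f1 : u + 2 * u ^ 3 / 3 ≤ Real.sinh u * Real.cosh u := by
    have h := cubic_lt_sinh (mul_pos two_pos hu)
    rw [Real.sinh_two_mul] at h
    nlinarith
  have f2 : Real.sinh u ≤ u * Real.cosh u := (sinh_lt_mul_cosh hu).le
  have f3 := Real.cosh_sq u
  have hsq : Real.sinh u ^ 2 ≤ u ^ 2 * Real.cosh u ^ 2 := by
    nlinarith [mul_le_mul f2 f2 hsu.le (mul_nonneg hu.le hcu.le)]
  have hp : (1 - u ^ 2) * Real.cosh u ^ 2 ≤ 1 := by linarith [hsq, f3]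
  have h4 : (1 - u ^ 2) * Real.sinh u ^ 2 ≤ u ^ 2 := by nlinarith [hp, f3]
  have hbu : 2 * u / 3 - 2 * u ^ 3 / 3 ≤
      Real.cosh u / Real.sinh u - u / Real.sinh u ^ 2 := by
    have hrw : Real.cosh u / Real.sinh u - u / Real.sinh u ^ 2
        = (Real.sinh u * Real.cosh u - u) / Real.sinh u ^ 2 := by
      field_simp
    rw [hrw, le_div_iff₀ (pow_pos hsu 2)]
    have h5 := mul_le_mul_of_nonneg_left h4 (by positivity : (0:ℝ) ≤ 2 * u / 3)
    linarith [f1, h5]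
  -- bound 2 : tanh part
  have hbv : Real.sinh v / Real.cosh v ≤ v := by
    rw [div_le_iff₀ hcv]
    exact (sinh_lt_mul_cosh hv).le
  -- bound 3 : last part
  have hbw : (q - t) * x * (1 - v ^ 2) ≤ (q - t) * x / Real.cosh v ^ 2 := by
    rw [le_div_iff₀ (pow_pos hcv 2)]
    have f2v : Real.sinh v ≤ v * Real.cosh v := (sinh_lt_mul_cosh hv).le
    have f3v := Real.cosh_sq v
    have hsv : 0 < Real.sinh v := Real.sinh_pos_iff.2 hv
    have hsqv : Real.sinh v ^ 2 ≤ v ^ 2 * Real.cosh v ^ 2 := by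
      nlinarith [mul_le_mul f2v f2v hsv.le (mul_nonneg hv.le hcv.le)]
    have hpv : (1 - v ^ 2) * Real.cosh v ^ 2 ≤ 1 := by linarith [hsqv, f3v]
    have hqx : 0 < (q - t) * x := mul_pos (by linarith) hx0
    have := mul_le_mul_of_nonneg_left hpv hqx.le
    linarith [this]
  -- identity and smallness
  have hident : 2 * u / 3 - 2 * u ^ 3 / 3 - v + (q - t) * x * (1 - v ^ 2)
      = ε * x - C * x ^ 3 := by
    rw [hudef, hvdef, hε, hC]; ring
  linarith [hbu, hbv, hbw, hident, hlast]

/-- The set `𝒜_q = {t > 1 : ∀ x > 0, ∂R_q/∂t(x,t) < 0}` equals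
`[1 + (3/4)(q−2), +∞)` if `q > 2`, and `(1, +∞)` if `0 < q ≤ 2`. -/
theorem Aq_eq (q : ℝ) (hq : 0 < q) :
    (2 < q →
      {t : ℝ | 1 < t ∧ ∀ x : ℝ, 0 < x → deriv (fun t' => Rq q x t') t < 0} =
        Set.Ici (1 + 3 / 4 * (q - 2))) ∧
    (q ≤ 2 →
      {t : ℝ | 1 < t ∧ ∀ x : ℝ, 0 < x → deriv (fun t' => Rq q x t') t < 0} =
        Set.Ioi 1) := by
  constructor
  · intro h2q
    ext t
    simp only [Set.mem_setOf_eq, Set.mem_Ici]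
    constructor
    · rintro ⟨ht, hall⟩
      by_contra hlt
      push_neg at hlt
      have hq' : (4 * t + 2) / 3 < q := by linarith
      obtain ⟨x, hx, hpos⟩ := exists_deriv_pos q t ht hq'
      exact absurd (hall x hx) (by linarith)
    · intro hge
      have ht : 1 < t := by linarith
      exact ⟨ht, fun x hx => deriv_neg_of_le q x t hx ht (by linarith)⟩
  · intro hle
    ext t
    simp only [Set.mem_setOf_eq, Set.mem_Ioi]
    constructor
    · rintro ⟨ht, _⟩; exact ht
    · intro ht
      exact ⟨ht, fun x hx => deriv_neg_of_le q x t hx ht (by linarith)⟩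
end
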